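/- Let φ(x) = E[tanh²(h+β√x Z)], q > 0 a fixed point of φ, and suppose φ'(z) > −φ(z)/(2z) for all z > 0 and that z ↦ φ(z)/z is decreasing on (0,∞). Then for all x ∈ (q, 2q]: q − (x−q)/2 < φ(x) < x; and for all x ∈ [q/2, q): x < φ(x) < q + (q−x)/(3x/q − 1). -/

import Mathlib

open MeasureTheory ProbabilityTheory
open scoped NNReal

/-- `φ(x) = E[tanh²(h + β √x Z)]`, `Z` a standard Gaussian. -/
noncomputable def phi (h β x : ℝ) : ℝ :=
  ∫ z, Real.tanh (h + β * Real.sqrt x * z) ^ 2 ∂(gaussianReal 0 1)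


lemma tanh_hasDerivAt (x : ℝ) : HasDerivAt Real.tanh (1 - Real.tanh x ^ 2) x := by
  have hc : Real.cosh x ≠ 0 := (Real.cosh_pos x).ne'
  have h := (Real.hasDerivAt_sinh x).div (Real.hasDerivAt_cosh x) hc
  have heq : Real.tanh = fun y => Real.sinh y / Real.cosh y := by
    funext y; exact Real.tanh_eq_sinh_div_cosh y
  rw [heq]
  refine h.congr_deriv ?_
  show _ = 1 - (Real.sinh x / Real.cosh x) ^ 2
  have h2 := Real.cosh_sq_sub_sinh_sq x
  field_simp

lemma abs_tanh_le_one (x : ℝ) : |Real.tanh x| ≤ 1 := by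
  rw [Real.tanh_eq_sinh_div_cosh, abs_div, abs_of_pos (Real.cosh_pos x),
    div_le_one (Real.cosh_pos x)]
  nlinarith [sq_abs (Real.sinh x), Real.cosh_sq x, Real.cosh_pos x, abs_nonneg (Real.sinh x)]

lemma integrable_abs_gaussian : Integrable (fun z : ℝ => |z|) (gaussianReal 0 1) := by
  rw [gaussianReal_of_var_ne_zero 0 one_ne_zero,
    integrable_withDensity_iff (measurable_gaussianPDF 0 1)
      (Filter.Eventually.of_forall fun x => ENNReal.ofReal_lt_top)]
  have h1 : Integrable (fun z : ℝ => z * Real.exp (-(1/2) * z ^ 2)) :=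
    integrable_mul_exp_neg_mul_sq (by norm_num)
  have h2 := (h1.abs.const_mul (Real.sqrt (2 * Real.pi * (1:ℝ≥0)))⁻¹)
  apply h2.congr
  filter_upwards with z
  have hnn : (0:ℝ) ≤ gaussianPDFReal 0 1 z := gaussianPDFReal_nonneg 0 1 z
  rw [gaussianPDF, ENNReal.toReal_ofReal hnn]
  rw [gaussianPDFReal]
  rw [abs_mul, abs_of_pos (Real.exp_pos _)]
  have : -(1/2 : ℝ) * z ^ 2 = -(z - 0)^2 / (2 * (1:ℝ≥0)) := by push_cast; ring
  rw [this]
  ring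

lemma continuous_tanh : Continuous Real.tanh :=
  (Real.continuous_sinh.div Real.continuous_cosh fun x => (Real.cosh_pos x).ne').congr
    (fun y => (Real.tanh_eq_sinh_div_cosh y).symm)

lemma inner_hasDerivAt (h β z y : ℝ) :
    HasDerivAt (fun x => Real.tanh (h + β * x * z) ^ 2)
      (2 * Real.tanh (h + β * y * z) ^ 1 * ((1 - Real.tanh (h + β * y * z) ^ 2) * (β * z))) y := by
  have hu : HasDerivAt (fun x : ℝ => h + β * x * z) (β * z) y := by
    simpa using (((hasDerivAt_id y).const_mul β).mul_const z).const_add h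
  exact ((tanh_hasDerivAt (h + β * y * z)).comp y hu).pow 2

lemma deriv_bound (h β z x : ℝ) :
    ‖2 * Real.tanh (h + β * x * z) ^ 1 * ((1 - Real.tanh (h + β * x * z) ^ 2) * (β * z))‖₊
      ≤ Real.nnabs (2 * |β| * |z|) := by
  rw [← NNReal.coe_le_coe]
  simp only [coe_nnnorm, Real.norm_eq_abs, Real.coe_nnabs]
  set t := Real.tanh (h + β * x * z) with hts
  have ht : |t| ≤ 1 := abs_tanh_le_one _
  have hsq : |t| * |t| ≤ 1 := by nlinarith [abs_nonneg t]
  have ht2 : 0 ≤ 1 - t ^ 2 := by rw [← sq_abs]; nlinarith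
  have ht3 : 1 - t ^ 2 ≤ 1 := by nlinarith [sq_nonneg t]
  have hrhs : abs (2 * |β| * |z|) = 2 * |β| * |z| := abs_of_nonneg (by positivity)
  rw [hrhs]
  calc |2 * t ^ 1 * ((1 - t ^ 2) * (β * z))|
      = 2 * (|t| * ((1 - t ^ 2) * (|β| * |z|))) := by
        rw [abs_mul, abs_mul, abs_mul, abs_mul, abs_two, abs_of_nonneg ht2, pow_one]; ring
    _ ≤ 2 * (1 * (1 * (|β| * |z|))) := by gcongr <;> positivity
    _ = 2 * |β| * |z| := by ring

lemma F_hasDerivAt (h β y : ℝ) :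
    HasDerivAt (fun y => ∫ z, Real.tanh (h + β * y * z) ^ 2 ∂(gaussianReal 0 1))
      (∫ z, 2 * Real.tanh (h + β * y * z) ^ 1 *
        ((1 - Real.tanh (h + β * y * z) ^ 2) * (β * z)) ∂(gaussianReal 0 1)) y := by
  have hmeas : ∀ x : ℝ, AEStronglyMeasurable (fun z => Real.tanh (h + β * x * z) ^ 2)
      (gaussianReal 0 1) := fun x =>
    ((continuous_tanh.comp (by continuity)).pow 2).aestronglyMeasurable
  refine (hasDerivAt_integral_of_dominated_loc_of_lip (s := Metric.ball y 1)
    (bound := fun z => 2 * |β| * |z|) (Metric.ball_mem_nhds y one_pos)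
    (Filter.Eventually.of_forall fun x => hmeas x) ?_ ?_ ?_ ?_ ?_).2
  · refine (integrable_const (1:ℝ)).mono' (hmeas y) ?_
    filter_upwards with z
    rw [Real.norm_eq_abs, abs_pow, pow_two]
    calc |Real.tanh (h + β * y * z)| * |Real.tanh (h + β * y * z)| ≤ 1 * 1 :=
          mul_le_mul (abs_tanh_le_one _) (abs_tanh_le_one _) (abs_nonneg _) zero_le_one
      _ = 1 := one_mul 1
  · have hc : Continuous fun z : ℝ => Real.tanh (h + β * y * z) :=
      continuous_tanh.comp (by continuity)
    exact (((continuous_const.mul (hc.pow 1)).mul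
      ((continuous_const.sub (hc.pow 2)).mul
        (continuous_const.mul continuous_id))).aestronglyMeasurable)
  · filter_upwards with z
    have hlip : LipschitzWith (Real.nnabs (2 * |β| * |z|))
        (fun x => Real.tanh (h + β * x * z) ^ 2) := by
      apply lipschitzWith_of_nnnorm_deriv_le
        (fun x => (inner_hasDerivAt h β z x).differentiableAt)
      intro x
      rw [(inner_hasDerivAt h β z x).deriv]
      exact deriv_bound h β z x
    exact hlip.lipschitzOnWith
  · exact (integrable_abs_gaussian.const_mul (2 * |β|)).congr
      (by filter_upwards with z; ring)
  · filter_upwards with z using inner_hasDerivAt h β z y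

lemma phi_eq (h β : ℝ) : phi h β =
    (fun y => ∫ z, Real.tanh (h + β * y * z) ^ 2 ∂(gaussianReal 0 1)) ∘ Real.sqrt := rfl

lemma phi_diff (h β : ℝ) {x : ℝ} (hx : 0 < x) : DifferentiableAt ℝ (phi h β) x := by
  rw [phi_eq]
  exact ((F_hasDerivAt h β (Real.sqrt x)).comp x
    (Real.hasDerivAt_sqrt hx.ne')).differentiableAt

lemma mono_aux (f : ℝ → ℝ) {c a b : ℝ} (ha : 0 < a) (hab : a < b)
    (hdiff : ∀ x, 0 < x → DifferentiableAt ℝ f x)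
    (hd : ∀ z ∈ Set.Ioo a b, -c < deriv f z) : f a + c * a < f b + c * b := by
  have hg : StrictMonoOn (fun z => f z + c * z) (Set.Icc a b) := by
    apply strictMonoOn_of_deriv_pos (convex_Icc a b)
    · intro x hx
      exact ((hdiff x (lt_of_lt_of_le ha hx.1)).add
        ((differentiableAt_id.const_mul c))).continuousAt.continuousWithinAt
    · intro x hx
      rw [interior_Icc] at hx
      have hdx := hdiff x (ha.trans hx.1)
      have hder : HasDerivAt (fun z => f z + c * z) (deriv f x + c * 1) x :=
        hdx.hasDerivAt.add ((hasDerivAt_id x).const_mul c)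
      rw [hder.deriv]
      have := hd x hx
      linarith
  exact hg (Set.left_mem_Icc.2 hab.le) (Set.right_mem_Icc.2 hab.le) hab

/-- Quantitative bounds on `φ` near a positive fixed point `q`, assuming the derivative
bound `φ'(z) > −φ(z)/(2z)`, monotonicity of `z ↦ φ(z)/z`, and the comparison of `φ` with the
identity on `(0,q)` and `(q,∞)`:
for `x ∈ (q, 2q]`, `q − (x−q)/2 < φ(x) < x`; and for `x ∈ [q/2, q)`,
`x < φ(x) < q + (q−x)/(3x/q − 1)`. -/
theorem stmt8 (h β q : ℝ) (hq : 0 < q) (hfix : phi h β q = q)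
    (hderiv : ∀ z, 0 < z → -(phi h β z) / (2 * z) < deriv (phi h β) z)
    (hratio : AntitoneOn (fun z => phi h β z / z) (Set.Ioi 0))
    (habove : ∀ x, 0 < x → x < q → x < phi h β x)
    (hbelow : ∀ x, q < x → phi h β x < x) :
    (∀ x, q < x → x ≤ 2 * q → q - (x - q) / 2 < phi h β x ∧ phi h β x < x) ∧
    (∀ x, q / 2 ≤ x → x < q →
      x < phi h β x ∧ phi h β x < q + (q - x) / (3 * x / q - 1)) := by
  constructor
  · intro x hqx hx2q
    refine ⟨?_, hbelow x hqx⟩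
    have key := mono_aux (phi h β) (c := 1/2) hq hqx (fun z hz => phi_diff h β hz) ?_
    · linarith [key, hfix]
    · intro z hz
      have hz0 : 0 < z := hq.trans hz.1
      have h1 := hderiv z hz0
      have h2 : phi h β z < z := hbelow z hz.1
      have : -(1/2 : ℝ) ≤ -(phi h β z) / (2 * z) := by
        rw [neg_div, neg_le_neg_iff, div_le_iff₀ (by linarith : (0:ℝ) < 2 * z)]
        linarith
      linarith
  · intro x hx1 hx2
    have hx0 : 0 < x := lt_of_lt_of_le (by linarith) hx1
    refine ⟨habove x hx0 hx2, ?_⟩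
    set c := phi h β x / (2 * x) with hc
    have hφx : 0 < phi h β x := hx0.trans (habove x hx0 hx2)
    have key := mono_aux (phi h β) (c := c) hx0 hx2 (fun z hz => phi_diff h β hz) ?_
    · -- key : phi x + c * x < phi q + c * q
      rw [hfix] at key
      have h3xq : 0 < 3 * x - q := by linarith
      have h2x : (0:ℝ) < 2 * x := by linarith
      have hA : c * x = phi h β x / 2 := by rw [hc]; field_simp
      have hB : c * q * (2 * x) = phi h β x * q := by rw [hc]; field_simp
      have key2 : (3 / 2 * phi h β x - q) * (2 * x) < phi h β x * q := by
        have hlt : 3 / 2 * phi h β x - q < c * q := by linarith [key, hA]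
        calc (3 / 2 * phi h β x - q) * (2 * x) < c * q * (2 * x) :=
              mul_lt_mul_of_pos_right hlt h2x
          _ = phi h β x * q := hB
      have hmul : phi h β x * (3 * x - q) < 2 * x * q := by nlinarith [key2]
      have hq3 : 3 * x / q - 1 = (3 * x - q) / q := by field_simp
      have hrw : q + (q - x) / (3 * x / q - 1) = 2 * x * q / (3 * x - q) := by
        rw [hq3, div_div_eq_mul_div, eq_div_iff h3xq.ne']
        rw [add_mul, div_mul_cancel₀ _ h3xq.ne']
        ring
      rw [hrw, lt_div_iff₀ h3xq]
      exact hmul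
    · intro z hz
      have hz0 : 0 < z := hx0.trans hz.1
      have h1 := hderiv z hz0
      have h2 : phi h β z / z ≤ phi h β x / x :=
        hratio (Set.mem_Ioi.2 hx0) (Set.mem_Ioi.2 hz0) hz.1.le
      have h2' : phi h β z * x ≤ phi h β x * z := (div_le_div_iff₀ hz0 hx0).1 h2
      have : -c ≤ -(phi h β z) / (2 * z) := by
        rw [hc, neg_div, neg_le_neg_iff,
          div_le_div_iff₀ (by linarith : (0:ℝ) < 2 * z) (by linarith : (0:ℝ) < 2 * x)]
        nlinarith [h2']
      linarith
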